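/- Let n ≥ 1 and let Δ be a 0-normalized Γ^{n,n+1}-semi-module with n-basis 0 = a_0 < a_1 < … < a_{n-1}. Then for every i with 0 ≤ i ≤ n−2, g(a_i) = g(a_{i+1}) if and only if the whole interval of integers [a_i, a_{i+1}] is contained in Δ. -/
import Mathlib


/-- The numerical semigroup `Γ^{p,q} = {ap + bq : a, b ∈ ℕ}`. -/
def Gamma (p q : ℕ) : Set ℕ := {n | ∃ a b : ℕ, n = a * p + b * q}

/-- A `0`-normalized `Γ^{p,q}`-semi-module: `0 ∈ Δ` and `Δ + Γ^{p,q} ⊆ Δ`. -/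
def IsSemiModule (p q : ℕ) (Δ : Set ℕ) : Prop :=
  0 ∈ Δ ∧ ∀ x ∈ Δ, ∀ g ∈ Gamma p q, x + g ∈ Δ

/-- The `p`-basis of `Δ`: the set `Δ \ (Δ + p)` of `p`-generators of `Δ`. -/
def pBasis (p : ℕ) (Δ : Set ℕ) : Set ℕ := Δ \ ((· + p) '' Δ)

/-- `g(a) = |[a, a + q) \ Δ|`. -/
noncomputable def gInt (q : ℕ) (Δ : Set ℕ) (a : ℕ) : ℕ := (Set.Ico a (a + q) \ Δ).ncard

/-- The dimension of a semi-module: `dim Δ = Σ_{a ∈ p-basis} |[a, a + q) \ Δ|`. -/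
noncomputable def dimDelta (p q : ℕ) (Δ : Set ℕ) : ℕ :=
  ∑ᶠ a ∈ pBasis p Δ, gInt q Δ a

/-- for the `n`-basis `0 = a_0 < … < a_{n-1}` of a `Γ^{n,n+1}`-semi-module,
`g(a_i) = g(a_{i+1})` iff the interval of integers `[a_i, a_{i+1}]` is contained in `Δ`. -/
theorem stmt_9 (n : ℕ) (hn : 1 ≤ n) (Δ : Set ℕ) (hΔ : IsSemiModule n (n + 1) Δ)
    (a : Fin n → ℕ) (ha : StrictMono a) (hrange : Set.range a = pBasis n Δ)
    (i : ℕ) (hi : i + 1 < n) :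
    gInt (n + 1) Δ (a ⟨i, by omega⟩) = gInt (n + 1) Δ (a ⟨i + 1, hi⟩) ↔
      Set.Icc (a ⟨i, by omega⟩) (a ⟨i + 1, hi⟩) ⊆ Δ := by
  obtain ⟨h0, hclose⟩ := hΔ
  set A := a ⟨i, by omega⟩ with hAdef
  set B := a ⟨i + 1, hi⟩ with hBdef
  have hAB : A < B := ha (Fin.mk_lt_mk.mpr (by omega))
  have hA : A ∈ Δ := by
    have : A ∈ pBasis n Δ := hrange ▸ ⟨_, rfl⟩
    exact this.1
  have hB : B ∈ Δ := by
    have : B ∈ pBasis n Δ := hrange ▸ ⟨_, rfl⟩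
    exact this.1
  have stepq : ∀ x ∈ Δ, x + (n + 1) ∈ Δ := fun x hx => hclose x hx _ ⟨0, 1, by ring⟩
  have stepn : ∀ x ∈ Δ, x + n ∈ Δ := fun x hx => hclose x hx n ⟨1, 0, by ring⟩
  set L := Set.Ico A B \ Δ with hLdef
  set H := Set.Ico (A + (n + 1)) (B + (n + 1)) \ Δ with hHdef
  have hLfin : L.Finite := (Set.finite_Ico _ _).subset Set.diff_subset
  have hHfin : H.Finite := (Set.finite_Ico _ _).subset Set.diff_subset
  -- the sliding-window identity
  have hkey : gInt (n + 1) Δ A + H.ncard = L.ncard + gInt (n + 1) Δ B := by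
    have hu : (Set.Ico A (A + (n + 1)) \ Δ) ∪ H
        = L ∪ (Set.Ico B (B + (n + 1)) \ Δ) := by
      rw [hHdef, hLdef, ← Set.union_diff_distrib, ← Set.union_diff_distrib,
        Set.Ico_union_Ico_eq_Ico (by omega) (by omega),
        Set.Ico_union_Ico_eq_Ico (by omega) (by omega)]
    have h1 : ((Set.Ico A (A + (n + 1)) \ Δ) ∪ H).ncard
        = (Set.Ico A (A + (n + 1)) \ Δ).ncard + H.ncard :=
      Set.ncard_union_eq
        (Set.disjoint_of_subset Set.diff_subset Set.diff_subset
          (by rw [Set.disjoint_left]; rintro y ⟨_, h1⟩ ⟨h2, _⟩; omega))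
        ((Set.finite_Ico _ _).subset Set.diff_subset) hHfin
    have h2 : (L ∪ (Set.Ico B (B + (n + 1)) \ Δ)).ncard
        = L.ncard + (Set.Ico B (B + (n + 1)) \ Δ).ncard :=
      Set.ncard_union_eq
        (Set.disjoint_of_subset Set.diff_subset Set.diff_subset
          (by rw [Set.disjoint_left]; rintro y ⟨_, h1⟩ ⟨h2, _⟩; omega))
        hLfin ((Set.finite_Ico _ _).subset Set.diff_subset)
    unfold gInt
    rw [← h1, ← h2, hu]
  -- the map y ↦ y - n sends H into L
  have hmaps : ∀ y ∈ H, y - n ∈ L := by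
    rintro y ⟨⟨hy1, hy2⟩, hyD⟩
    have hyB : y - n ≠ B := by
      intro h
      have : B + n ∈ Δ := stepn B hB
      have : y ∈ Δ := by rwa [show y = B + n by omega]
      exact hyD this
    refine ⟨⟨by omega, by omega⟩, ?_⟩
    intro hd
    have : y - n + n ∈ Δ := stepn _ hd
    rw [show y - n + n = y by omega] at this
    exact hyD this
  have hinjOn : ∀ s : Set ℕ, Set.InjOn (· - n) H := by
    intro _ y1 hy1 y2 hy2 h
    have h1 : A + (n + 1) ≤ y1 := hy1.1.1
    have h2 : A + (n + 1) ≤ y2 := hy2.1.1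
    simp only at h
    omega
  constructor
  · -- g(A) = g(B) → Icc ⊆ Δ
    intro hg
    intro x hx
    by_contra hxD
    have hxB : x ≠ B := fun h => hxD (h ▸ hB)
    have hxL : x ∈ L := ⟨⟨hx.1, lt_of_le_of_ne hx.2 hxB⟩, hxD⟩
    obtain ⟨x₀, hx₀L, hx₀min⟩ := Nat.lt_wfRel.wf.has_min L ⟨x, hxL⟩
    -- x₀ - 1 ∈ Δ, hence x₀ + n ∈ Δ
    have hx₀A : A < x₀ := lt_of_le_of_ne hx₀L.1.1 (fun h => hx₀L.2 (h ▸ hA))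
    have hx₀B : x₀ < B := hx₀L.1.2
    have hprev : x₀ - 1 ∈ Δ := by
      by_contra hd
      have : x₀ - 1 ∈ L := ⟨⟨by omega, by omega⟩, hd⟩
      exact hx₀min _ this (show x₀ - 1 < x₀ by omega)
    have hx₀n : x₀ + n ∈ Δ := by
      have := stepq _ hprev
      rwa [show x₀ - 1 + (n + 1) = x₀ + n by omega] at this
    -- injection H → L \ {x₀}
    have hle : H.ncard ≤ (L \ {x₀}).ncard := by
      refine Set.ncard_le_ncard_of_injOn (· - n) ?_ (hinjOn L) (hLfin.subset Set.diff_subset)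
      intro y hy
      refine ⟨hmaps y hy, ?_⟩
      simp only [Set.mem_singleton_iff]
      intro h
      have hy1 : A + (n + 1) ≤ y := hy.1.1
      have : y = x₀ + n := by omega
      exact hy.2 (this ▸ hx₀n)
    have hlt : (L \ {x₀}).ncard < L.ncard :=
      Set.ncard_diff_singleton_lt_of_mem hx₀L hLfin
    omega
  · -- Icc ⊆ Δ → g(A) = g(B)
    intro hIcc
    have hL0 : L = ∅ := by
      ext x
      simp only [hLdef, Set.mem_diff, Set.mem_Ico, Set.mem_empty_iff_false, iff_false]
      rintro ⟨⟨h1, h2⟩, hd⟩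
      exact hd (hIcc ⟨h1, by omega⟩)
    have hle : H.ncard ≤ L.ncard :=
      Set.ncard_le_ncard_of_injOn (· - n) hmaps (hinjOn L) hLfin
    rw [hL0, Set.ncard_empty] at hkey hle
    omega
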